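/- Let p be prime, G = ℤ_{p^{α₁}} ⊕ ⋯ ⊕ ℤ_{p^{α_r}}, h = Σ α_i, s ≥ 0 with p^h > Σ_{j=1}^r p^s(p^{α_j} − 1). Then EGZ_{p^h}^{(p^s)}(G) = p^h + p^s Σ_{j=1}^r (p^{α_j} − 1) = p^h + D^{(p^s)}(G) − p^s. -/

import Mathlib

open Finset

/-- The `m`-th elementary symmetric expression of the subsequence of `g` selected
by the index set `J`. -/
def eSym {n : ℕ} {R : Type*} [CommRing R] (m : ℕ) (g : Fin n → R) (J : Finset (Fin n)) : R :=
  ∑ T ∈ J.powersetCard m, ∏ i ∈ T, g i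



/-- Single-step reduction: `p ∣ C(M, p^(k+1)) ↔ p ∣ C(M/p, p^k)`. -/
lemma dvd_choose_pow_iff (p : ℕ) (hp : p.Prime) : ∀ (k M : ℕ),
    p ∣ M.choose (p ^ k) ↔ p ∣ M / p ^ k := by
  haveI : Fact p.Prime := ⟨hp⟩
  intro k
  induction k with
  | zero => intro M; simp [Nat.choose_one_right]
  | succ k ih =>
    intro M
    have hmod : M.choose (p ^ (k+1)) ≡ (M % p).choose (p ^ (k+1) % p) *
        ((M / p).choose (p ^ (k+1) / p)) [MOD p] :=
      Choose.choose_modEq_choose_mod_mul_choose_div_nat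
    have h1 : p ^ (k+1) % p = 0 := by
      simp [Nat.pow_succ, Nat.mul_mod_left]
    have h2 : p ^ (k+1) / p = p ^ k := by
      rw [pow_succ', Nat.mul_div_cancel_left _ hp.pos]
    rw [h1, h2, Nat.choose_zero_right, one_mul] at hmod
    have : p ∣ M.choose (p ^ (k+1)) ↔ p ∣ (M / p).choose (p ^ k) := by
      constructor <;> intro hd
      · exact (Nat.modEq_zero_iff_dvd.mp ((hmod.symm.trans (Nat.modEq_zero_iff_dvd.mpr hd))))
      · exact (Nat.modEq_zero_iff_dvd.mp ((hmod.trans (Nat.modEq_zero_iff_dvd.mpr hd))))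
    rw [this, ih, Nat.div_div_eq_div_mul, ← pow_succ']

/-- If all base-`p` digits of `M` below position `h` vanish (expressed via binomials),
then `p^h ∣ M`. -/
lemma pow_dvd_of_digits (p : ℕ) (hp : p.Prime) (h M : ℕ)
    (hd : ∀ k < h, p ∣ M.choose (p ^ k)) : p ^ h ∣ M := by
  induction h with
  | zero => simp
  | succ h ih =>
    have hph : p ^ h ∣ M := ih (fun k hk => hd k (Nat.lt_succ_of_lt hk))
    obtain ⟨c, rfl⟩ := hph
    have : p ∣ (p ^ h * c) / p ^ h := (dvd_choose_pow_iff p hp h _).mp (hd h (Nat.lt_succ_self h))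
    rw [Nat.mul_div_cancel_left _ (pow_pos hp.pos h)] at this
    rw [pow_succ]
    exact mul_dvd_mul (dvd_refl _) this

/-- Kummer-type bound: for `1 ≤ a ≤ p^(s+α) - p^s` and `s + α ≤ h`,
`p^α` does not divide `C(p^h - a, p^s)`. -/
lemma kummer_not_dvd (p : ℕ) (hp : p.Prime) (s α h a : ℕ)
    (ha1 : 1 ≤ a) (ha2 : a ≤ p ^ (s + α) - p ^ s) (hsh : s + α ≤ h) :
    ¬ p ^ α ∣ (p ^ h - a).choose (p ^ s) := by
  intro hdvd
  set N := p ^ h - a with hN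
  have hp1 : 1 < p := hp.one_lt
  have hpow_le : p ^ (s+α) ≤ p ^ h := Nat.pow_le_pow_right hp.pos (le_of_eq rfl) |>.trans
    (Nat.pow_le_pow_right hp.pos hsh)
  have hα1 : 1 ≤ α := by
    by_contra hc
    push_neg at hc
    interval_cases α
    · simp at ha2; omega
  have hps_lt : p ^ s < p ^ (s+α) := Nat.pow_lt_pow_right hp1 (by omega)
  have haps : a + p ^ s ≤ p ^ (s + α) := by omega
  have hps1 : 1 ≤ p ^ s := Nat.one_le_pow _ _ hp.pos
  have hkN : p ^ s ≤ N := by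
    have h1 : p ^ s + a ≤ p ^ (s+α) := by omega
    omega
  have hlog : Nat.log p N < h + 1 := by
    have h2 : N < p ^ (h+1) := by
      have h3 : N ≤ p ^ h := Nat.sub_le _ _
      have h4 : p ^ h < p ^ (h+1) := Nat.pow_lt_pow_right hp1 (Nat.lt_succ_self h)
      omega
    exact Nat.log_lt_of_lt_pow (by omega) h2
  have hkum := Nat.Prime.emultiplicity_choose hp hkN hlog
  have hsub : (Finset.Ico 1 (h+1)).filter
        (fun i => p ^ i ≤ p ^ s % p ^ i + (N - p ^ s) % p ^ i)
      ⊆ Finset.Ico (s+1) (s+α) := by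
    intro i hi
    simp only [Finset.mem_filter, Finset.mem_Ico] at hi ⊢
    obtain ⟨⟨hi1, hi2⟩, hcond⟩ := hi
    have hipos : 0 < p ^ i := pow_pos hp.pos i
    constructor
    · -- i ≥ s+1
      by_contra hc
      push_neg at hc
      have his : i ≤ s := by omega
      obtain ⟨c5, hc5⟩ : p ^ i ∣ p ^ s := pow_dvd_pow p his
      have h5 : p ^ s % p ^ i = 0 := by rw [hc5, Nat.mul_mod_right]
      have h6 : (N - p ^ s) % p ^ i < p ^ i := Nat.mod_lt _ hipos
      omega
    · -- i < s+α
      by_contra hc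
      push_neg at hc
      have hiah : i ≤ h := by omega
      have h5 : p ^ s % p ^ i = p ^ s :=
        Nat.mod_eq_of_lt (Nat.pow_lt_pow_right hp1 (by omega))
      obtain ⟨t, ht⟩ : p ^ i ∣ p ^ h := pow_dvd_pow p hiah
      have hpi_le : p ^ (s+α) ≤ p ^ i := Nat.pow_le_pow_right hp.pos hc
      have hxle : a + p ^ s ≤ p ^ i := le_trans haps hpi_le
      have ht1 : 1 ≤ t := by
        rcases Nat.eq_zero_or_pos t with h0 | h0
        · rw [h0, mul_zero] at ht
          have := pow_pos hp.pos h
          omega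
        · exact h0
      obtain ⟨u, rfl⟩ : ∃ u, t = u + 1 := ⟨t - 1, by omega⟩
      have hht : p ^ h = p ^ i * u + p ^ i := by rw [ht]; ring
      have hNs : N - p ^ s = p ^ i * u + (p ^ i - (a + p ^ s)) := by omega
      have h8 : (N - p ^ s) % p ^ i = (p ^ i - (a + p ^ s)) % p ^ i := by
        rw [hNs, Nat.add_comm, Nat.add_mul_mod_self_left]
      rcases Nat.lt_or_ge (a + p ^ s) (p ^ i) with hxlt | hxge
      · have h9 : (p ^ i - (a + p ^ s)) % p ^ i = p ^ i - (a + p ^ s) :=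
          Nat.mod_eq_of_lt (by omega)
        omega
      · have hxeq : a + p ^ s = p ^ i := by omega
        have h9 : (p ^ i - (a + p ^ s)) % p ^ i = 0 := by
          rw [hxeq]; simp
        have : p ^ s < p ^ i := Nat.pow_lt_pow_right hp1 (by omega)
        omega
  -- conclude
  have hcard : ((Finset.Ico 1 (h+1)).filter
        (fun i => p ^ i ≤ p ^ s % p ^ i + (N - p ^ s) % p ^ i)).card ≤ α - 1 := by
    have := Finset.card_le_card hsub
    rwa [Nat.card_Ico, show s + α - (s+1) = α - 1 by omega] at this
  have hle : (α : ℕ∞) ≤ emultiplicity p (N.choose (p ^ s)) :=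
    le_emultiplicity_of_pow_dvd hdvd
  rw [hkum] at hle
  have h10 : (α : ℕ∞) ≤ (α - 1 : ℕ) := hle.trans (Nat.cast_le.mpr hcard)
  have : α ≤ α - 1 := Nat.cast_le.mp h10
  omega


section SDeg
variable {N : ℕ} {R : Type*} [CommRing R]

/-- `f` is representable as a combination of "monomials" `[T ⊆ S]` with `|T| ≤ d`. -/
def SDeg (N : ℕ) (R : Type*) [CommRing R] (d : ℕ) (f : Finset (Fin N) → R) : Prop :=
  ∃ γ : Finset (Fin N) → R, (∀ T : Finset (Fin N), d < T.card → γ T = 0) ∧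
    ∀ S, f S = ∑ T ∈ S.powerset, γ T

lemma SDeg.mono {d d' : ℕ} (h : d ≤ d') {f : Finset (Fin N) → R} (hf : SDeg N R d f) :
    SDeg N R d' f := by
  obtain ⟨γ, hγ, hrep⟩ := hf
  exact ⟨γ, fun T hT => hγ T (lt_of_le_of_lt h hT), hrep⟩

lemma SDeg.const (c : R) : SDeg N R 0 (fun _ => c) := by
  refine ⟨fun T => if T = ∅ then c else 0, ?_, ?_⟩
  · intro T hT
    dsimp only
    rw [if_neg]
    intro h; subst h; simp at hT
  · intro S
    rw [Finset.sum_ite_eq' S.powerset (∅ : Finset (Fin N)) (fun _ => c)]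
    simp

lemma SDeg.indicator (T₀ : Finset (Fin N)) (c : R) :
    SDeg N R T₀.card (fun S => if T₀ ⊆ S then c else 0) := by
  refine ⟨fun T => if T = T₀ then c else 0, ?_, ?_⟩
  · intro T hT
    dsimp only
    rw [if_neg]; intro h; subst h; omega
  · intro S
    rw [Finset.sum_ite_eq' S.powerset T₀ (fun _ => c)]
    simp [Finset.mem_powerset]

lemma SDeg.add {d : ℕ} {f g : Finset (Fin N) → R} (hf : SDeg N R d f) (hg : SDeg N R d g) :
    SDeg N R d (fun S => f S + g S) := by
  obtain ⟨γ, hγ, hrepf⟩ := hf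
  obtain ⟨δ, hδ, hrepg⟩ := hg
  exact ⟨fun T => γ T + δ T, fun T hT => by dsimp only; rw [hγ T hT, hδ T hT, add_zero],
    fun S => by dsimp only; rw [hrepf, hrepg, ← Finset.sum_add_distrib]⟩

lemma SDeg.neg {d : ℕ} {f : Finset (Fin N) → R} (hf : SDeg N R d f) :
    SDeg N R d (fun S => - f S) := by
  obtain ⟨γ, hγ, hrep⟩ := hf
  exact ⟨fun T => - γ T, fun T hT => by dsimp only; rw [hγ T hT, neg_zero],
    fun S => by dsimp only; rw [hrep, ← Finset.sum_neg_distrib]⟩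

lemma SDeg.smul {d : ℕ} (c : R) {f : Finset (Fin N) → R} (hf : SDeg N R d f) :
    SDeg N R d (fun S => c * f S) := by
  obtain ⟨γ, hγ, hrep⟩ := hf
  exact ⟨fun T => c * γ T, fun T hT => by dsimp only; rw [hγ T hT, mul_zero],
    fun S => by dsimp only; rw [hrep, Finset.mul_sum]⟩

lemma SDeg.mul {d e : ℕ} {f g : Finset (Fin N) → R} (hf : SDeg N R d f) (hg : SDeg N R e g) :
    SDeg N R (d + e) (fun S => f S * g S) := by
  classical
  obtain ⟨γ, hγ, hrepf⟩ := hf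
  obtain ⟨δ, hδ, hrepg⟩ := hg
  refine ⟨fun U => ∑ q ∈ (univ : Finset (Finset (Fin N) × Finset (Fin N))).filter
      (fun q => q.1 ∪ q.2 = U), γ q.1 * δ q.2, ?_, ?_⟩
  · intro U hU
    apply Finset.sum_eq_zero
    intro q hq
    simp only [Finset.mem_filter] at hq
    rcases le_or_gt q.1.card d with h1 | h1
    · rcases le_or_gt q.2.card e with h2 | h2
      · exfalso
        have := Finset.card_union_le q.1 q.2
        rw [hq.2] at this
        omega
      · rw [hδ _ h2, mul_zero]
    · rw [hγ _ h1, zero_mul]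
  · intro S
    dsimp only
    rw [hrepf, hrepg, Finset.sum_mul_sum, ← Finset.sum_product']
    have key := Finset.sum_fiberwise_of_maps_to (g := fun q : Finset (Fin N) × Finset (Fin N)
        => q.1 ∪ q.2) (t := S.powerset)
        (s := S.powerset ×ˢ S.powerset)
        (fun q hq => by
          simp only [Finset.mem_product, Finset.mem_powerset] at hq
          exact Finset.mem_powerset.mpr (Finset.union_subset hq.1 hq.2))
        (fun q => γ q.1 * δ q.2)
    rw [← key]
    apply Finset.sum_congr rfl
    intro U hU
    apply Finset.sum_congr _ (fun _ _ => rfl)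
    ext q
    simp only [Finset.mem_filter, Finset.mem_product, Finset.mem_powerset, Finset.mem_univ,
      true_and]
    constructor
    · rintro ⟨⟨h1, h2⟩, h3⟩; exact h3
    · intro h3
      rw [Finset.mem_powerset] at hU
      constructor
      · constructor
        · exact (Finset.union_subset_iff.mp (h3 ▸ hU)).1
        · exact (Finset.union_subset_iff.mp (h3 ▸ hU)).2
      · exact h3

lemma SDeg.pow {d : ℕ} {f : Finset (Fin N) → R} (hf : SDeg N R d f) (k : ℕ) :
    SDeg N R (k * d) (fun S => (f S) ^ k) := by
  induction k with
  | zero => simpa using SDeg.const 1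
  | succ k ih =>
    have h2 := ih.mul hf
    have : (k + 1) * d = k * d + d := by ring
    rw [this]
    convert h2 using 1
    funext S
    rw [pow_succ]

lemma SDeg.sum {ι : Type*} {I : Finset ι} {e : ℕ} {F : ι → Finset (Fin N) → R}
    (hF : ∀ i ∈ I, SDeg N R e (F i)) :
    SDeg N R e (fun S => ∑ i ∈ I, F i S) := by
  classical
  induction I using Finset.induction_on with
  | empty =>
    have h0 : SDeg N R e (fun _ => (0 : R)) := (SDeg.const 0).mono (Nat.zero_le e)
    simpa using h0
  | @insert i I hnot ih =>
    simp only [Finset.sum_insert hnot]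
    exact (hF i (Finset.mem_insert_self i I)).add
      (ih (fun j hj => hF j (Finset.mem_insert_of_mem hj)))

lemma SDeg.prod {ι : Type*} {I : Finset ι} {d : ι → ℕ} {F : ι → Finset (Fin N) → R}
    (hF : ∀ i ∈ I, SDeg N R (d i) (F i)) :
    SDeg N R (∑ i ∈ I, d i) (fun S => ∏ i ∈ I, F i S) := by
  classical
  induction I using Finset.induction_on with
  | empty =>
    have h0 : SDeg N R 0 (fun _ => (1 : R)) := SDeg.const 1
    simpa using h0
  | @insert i I hnot ih =>
    simp only [Finset.prod_insert hnot, Finset.sum_insert hnot]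
    exact (hF i (Finset.mem_insert_self i I)).mul
      (ih (fun j hj => hF j (Finset.mem_insert_of_mem hj)))

lemma SDeg.vanish {d : ℕ} {f : Finset (Fin N) → R} (hf : SDeg N R d f) (hd : d < N) :
    ∑ S : Finset (Fin N), (-1 : R) ^ S.card * f S = 0 := by
  classical
  obtain ⟨γ, hγ, hrep⟩ := hf
  have step1 : ∑ S : Finset (Fin N), (-1 : R) ^ S.card * f S
      = ∑ T : Finset (Fin N), (∑ S ∈ (univ : Finset (Finset (Fin N))).filter
          (fun S => T ⊆ S), (-1 : R) ^ S.card) * γ T := by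
    simp_rw [hrep, Finset.mul_sum, Finset.sum_mul]
    rw [Finset.sum_comm' (s' := fun T => (univ : Finset (Finset (Fin N))).filter
        (fun S => T ⊆ S)) (t' := (univ : Finset (Finset (Fin N))))]
    intro S T
    simp [Finset.mem_powerset]
  rw [step1]
  apply Finset.sum_eq_zero
  intro T _
  rcases le_or_gt T.card d with hT | hT
  · have hcompl : (Tᶜ : Finset (Fin N)).Nonempty := by
      rw [← Finset.card_pos, Finset.card_compl, Fintype.card_fin]
      have : T.card < N := lt_of_le_of_lt hT hd
      omega
    have reindex : ∑ S ∈ (univ : Finset (Finset (Fin N))).filter (fun S => T ⊆ S),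
        (-1 : R) ^ S.card = ∑ V ∈ (Tᶜ : Finset (Fin N)).powerset, (-1 : R) ^ (T.card + V.card) := by
      apply Finset.sum_nbij' (i := fun S => S \ T) (j := fun V => T ∪ V)
      · intro S hS
        simp only [Finset.mem_filter, Finset.mem_univ, true_and] at hS
        simp only [Finset.mem_powerset]
        intro x hx
        simp only [Finset.mem_sdiff] at hx
        simp [hx.2]
      · intro V hV
        simp only [Finset.mem_filter, Finset.mem_univ, true_and]
        exact Finset.subset_union_left
      · intro S hS
        simp only [Finset.mem_filter, Finset.mem_univ, true_and] at hS
        exact Finset.union_sdiff_of_subset hS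
      · intro V hV
        simp only [Finset.mem_powerset] at hV
        apply Finset.union_sdiff_cancel_left
        rw [Finset.disjoint_left]
        intro x hx hxV
        have := hV hxV
        simp only [Finset.mem_compl] at this
        exact this hx
      · intro S hS
        simp only [Finset.mem_filter, Finset.mem_univ, true_and] at hS
        congr 1
        rw [← Finset.card_sdiff_add_card_eq_card hS]
        ring
    rw [reindex]
    have : ∑ V ∈ (Tᶜ : Finset (Fin N)).powerset, (-1 : R) ^ (T.card + V.card)
        = (-1 : R) ^ T.card * ∑ V ∈ (Tᶜ : Finset (Fin N)).powerset, (-1 : R) ^ V.card := by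
      rw [Finset.mul_sum]
      apply Finset.sum_congr rfl
      intro V _
      rw [pow_add]
    rw [this]
    have hzero : ∑ V ∈ (Tᶜ : Finset (Fin N)).powerset, (-1 : R) ^ V.card = 0 := by
      have hint := Finset.sum_powerset_neg_one_pow_card (x := (Tᶜ : Finset (Fin N)))
      rw [if_neg (Finset.nonempty_iff_ne_empty.mp hcompl)] at hint
      calc ∑ V ∈ (Tᶜ : Finset (Fin N)).powerset, (-1 : R) ^ V.card
          = ((∑ V ∈ (Tᶜ : Finset (Fin N)).powerset, (-1 : ℤ) ^ V.card : ℤ) : R) := by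
            push_cast; rfl
        _ = 0 := by rw [hint]; simp
    rw [hzero, mul_zero, zero_mul]
  · rw [hγ T hT, mul_zero]

end SDeg

section ChooseDeg
variable {N : ℕ} {R : Type*} [CommRing R]

lemma SDeg.congr {d : ℕ} {f g : Finset (Fin N) → R} (h : ∀ S, f S = g S)
    (hf : SDeg N R d f) : SDeg N R d g := by
  obtain ⟨γ, hγ, hrep⟩ := hf
  exact ⟨γ, hγ, fun S => (h S) ▸ hrep S⟩

lemma SDeg.choose_card (m : ℕ) :
    SDeg N R m (fun S => ((S.card.choose m : ℕ) : R)) := by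
  refine ⟨fun T => if T.card = m then 1 else 0, ?_, ?_⟩
  · intro T hT
    dsimp only
    rw [if_neg]; omega
  · intro S
    dsimp only
    rw [← Finset.sum_filter]
    rw [Finset.sum_const, ← Finset.powersetCard_eq_filter, Finset.card_powersetCard]
    simp

lemma SDeg.choose_sum {ι : Type*} [DecidableEq ι] (q : ℕ) (I : Finset ι)
    (A : ι → Finset (Fin N)) (w : ι → ℕ) (hA : ∀ i ∈ I, (A i).card ≤ q) :
    ∀ m : ℕ, SDeg N R (q * m)
      (fun S => (((∑ i ∈ I, if A i ⊆ S then w i else 0).choose m : ℕ) : R)) := by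
  classical
  induction I using Finset.induction_on with
  | empty =>
    intro m
    apply SDeg.congr (f := fun _ => ((Nat.choose 0 m : ℕ) : R))
    · intro S; simp
    · exact (SDeg.const _).mono (Nat.zero_le _)
  | @insert i I hnot ih =>
    intro m
    have hAi : (A i).card ≤ q := hA i (Finset.mem_insert_self i I)
    have ih' := ih (fun j hj => hA j (Finset.mem_insert_of_mem hj))
    apply SDeg.congr (f := fun S => ∑ ij ∈ Finset.HasAntidiagonal.antidiagonal m,
        (((if A i ⊆ S then w i else 0).choose ij.1 : ℕ) : R) *
        (((∑ i' ∈ I, if A i' ⊆ S then w i' else 0).choose ij.2 : ℕ) : R))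
    · intro S
      rw [Finset.sum_insert hnot, Nat.add_choose_eq]
      push_cast
      rfl
    · apply SDeg.sum
      intro ij hij
      have hxy : ij.1 + ij.2 = m := Finset.HasAntidiagonal.mem_antidiagonal.mp hij
      have hmul : SDeg N R (q * ij.1 + q * ij.2) (fun S =>
          (((if A i ⊆ S then w i else 0).choose ij.1 : ℕ) : R) *
          (((∑ i' ∈ I, if A i' ⊆ S then w i' else 0).choose ij.2 : ℕ) : R)) := by
        apply SDeg.mul _ (ih' ij.2)
        rcases Nat.eq_zero_or_pos ij.1 with h0 | h0
        · apply SDeg.congr (f := fun _ => (1 : R))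
          · intro S; rw [h0]; simp
          · exact (SDeg.const _).mono (Nat.zero_le _)
        · apply SDeg.congr (f := fun S => if A i ⊆ S then (((w i).choose ij.1 : ℕ) : R) else 0)
          · intro S
            split
            · rfl
            · rw [Nat.choose_eq_zero_of_lt h0, Nat.cast_zero]
          · exact (SDeg.indicator (A i) _).mono
              (le_trans hAi (le_mul_of_one_le_right (Nat.zero_le q) h0))
      have : q * ij.1 + q * ij.2 = q * m := by rw [← Nat.mul_add, hxy]
      exact this ▸ hmul

lemma SDeg.choose_esym (q m : ℕ) (w : Finset (Fin N) → ℕ) :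
    SDeg N R (q * m)
      (fun S => (((∑ T ∈ S.powersetCard q, w T).choose m : ℕ) : R)) := by
  classical
  apply SDeg.congr (f := fun S => (((∑ T ∈ (univ : Finset (Fin N)).powersetCard q,
      if T ⊆ S then w T else 0).choose m : ℕ) : R))
  · intro S
    congr 2
    rw [← Finset.sum_filter]
    apply Finset.sum_congr _ (fun _ _ => rfl)
    ext T
    simp only [Finset.mem_filter, Finset.mem_powersetCard, Finset.subset_univ, true_and]
    tauto
  · exact SDeg.choose_sum q _ _ w
      (fun T hT => le_of_eq (Finset.mem_powersetCard.mp hT).2) m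

end ChooseDeg


lemma geom_nat (p : ℕ) (hp : 1 ≤ p) : ∀ β : ℕ, ∑ k ∈ range β, (p - 1) * p ^ k + 1 = p ^ β := by
  intro β
  induction β with
  | zero => simp
  | succ β ih =>
    rw [Finset.sum_range_succ, pow_succ]
    have h1 : (p - 1) * p ^ β = p * p ^ β - p ^ β := by rw [Nat.sub_one_mul]
    have h2 : p * p ^ β = p ^ β * p := Nat.mul_comm _ _
    have hpβ : 1 ≤ p ^ β := Nat.one_le_pow _ _ hp
    have h3 : p ^ β ≤ p * p ^ β := Nat.le_mul_of_pos_left _ hp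
    omega

lemma upper_bound (p : ℕ) (hp : p.Prime) (r : ℕ) (α : Fin r → ℕ) (hα : ∀ j, 1 ≤ α j)
    (s : ℕ) (hbig : ∑ j, p ^ s * (p ^ α j - 1) < p ^ (∑ j, α j))
    (n : ℕ) (hn : p ^ (∑ j, α j) + p ^ s * ∑ j, (p ^ α j - 1) ≤ n)
    (g : Fin n → (∀ j : Fin r, ZMod (p ^ α j))) :
    ∃ J : Finset (Fin n), J.card = p ^ (∑ j, α j) ∧ eSym (p ^ s) g J = 0 := by
  classical
  haveI : Fact p.Prime := ⟨hp⟩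
  set h := ∑ j, α j with hh
  set d := ∑ j, (p ^ α j - 1) with hd
  set N := p ^ h + p ^ s * d with hN
  have hp1 : 1 < p := hp.one_lt
  have hps1 : 1 ≤ p ^ s := Nat.one_le_pow _ _ hp.pos
  have hph1 : 1 ≤ p ^ h := Nat.one_le_pow _ _ hp.pos
  have hbig' : p ^ s * d < p ^ h := by
    rw [hd, Finset.mul_sum]; exact hbig
  -- the sequence restricted to the first N indices
  have hNn : N ≤ n := hn
  set emb : Fin N ↪ Fin n := Fin.castLEEmb hNn with hemb
  set a : Fin N → Fin r → ℕ := fun i j => (g (emb i) j).val with ha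
  set E : Fin r → Finset (Fin N) → ℕ :=
    fun j S => ∑ T ∈ S.powersetCard (p ^ s), ∏ i ∈ T, a i j with hE
  set Φ : Finset (Fin N) → ZMod p := fun S =>
    (∏ j : Fin r, ∏ k ∈ range (α j), (1 - (((E j S).choose (p ^ k) : ℕ) : ZMod p) ^ (p - 1))) *
    (∏ k ∈ range h, (1 - ((S.card.choose (p ^ k) : ℕ) : ZMod p) ^ (p - 1))) with hΦ
  -- degree bound
  have hdeg : SDeg N (ZMod p)
      ((∑ j : Fin r, ∑ k ∈ range (α j), (p - 1) * (p ^ s * p ^ k)) +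
        ∑ k ∈ range h, (p - 1) * p ^ k) Φ := by
    apply SDeg.mul
    · apply SDeg.prod
      intro j _
      apply SDeg.prod
      intro k _
      have h1 : SDeg N (ZMod p) (p ^ s * p ^ k)
          (fun S => (((E j S).choose (p ^ k) : ℕ) : ZMod p)) :=
        SDeg.choose_esym (p ^ s) (p ^ k) (fun T => ∏ i ∈ T, a i j)
      have h2 := (h1.pow (p - 1)).neg
      have h3 : SDeg N (ZMod p) ((p-1) * (p ^ s * p ^ k)) (fun _ => (1 : ZMod p)) :=
        (SDeg.const 1).mono (Nat.zero_le _)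
      exact SDeg.congr (fun S => by ring) (h3.add h2)
    · apply SDeg.prod
      intro k _
      have h1 : SDeg N (ZMod p) (p ^ k)
          (fun S => ((S.card.choose (p ^ k) : ℕ) : ZMod p)) := SDeg.choose_card (p ^ k)
      have h2 := (h1.pow (p - 1)).neg
      have h3 : SDeg N (ZMod p) ((p-1) * p ^ k) (fun _ => (1 : ZMod p)) :=
        (SDeg.const 1).mono (Nat.zero_le _)
      exact SDeg.congr (fun S => by ring) (h3.add h2)
  have hdeg_val : (∑ j : Fin r, ∑ k ∈ range (α j), (p - 1) * (p ^ s * p ^ k)) +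
      ∑ k ∈ range h, (p - 1) * p ^ k < N := by
    have e1 : ∀ j : Fin r, ∑ k ∈ range (α j), (p - 1) * (p ^ s * p ^ k)
        = p ^ s * (p ^ α j - 1) := by
      intro j
      have := geom_nat p hp.pos (α j)
      calc ∑ k ∈ range (α j), (p - 1) * (p ^ s * p ^ k)
          = p ^ s * ∑ k ∈ range (α j), (p - 1) * p ^ k := by
            rw [Finset.mul_sum]; apply Finset.sum_congr rfl; intro k _; ring
        _ = p ^ s * (p ^ α j - 1) := by
            rw [show ∑ k ∈ range (α j), (p - 1) * p ^ k = p ^ α j - 1 from by omega]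
    have e2 : ∑ k ∈ range h, (p - 1) * p ^ k = p ^ h - 1 := by
      have := geom_nat p hp.pos h
      omega
    have e3 : ∑ j : Fin r, ∑ k ∈ range (α j), (p - 1) * (p ^ s * p ^ k)
        = p ^ s * d := by
      rw [Finset.sum_congr rfl (fun j _ => e1 j), hd, Finset.mul_sum]
    rw [e2, e3, hN]
    omega
  have hvanish := (hdeg.mono (le_refl _)).vanish hdeg_val
  -- Φ ∅ = 1
  have hchoose0 : ∀ k : ℕ, (Nat.choose 0 (p ^ k) : ZMod p) = 0 := by
    intro k
    rw [Nat.choose_eq_zero_of_lt (pow_pos hp.pos k)]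
    simp
  have hΦempty : Φ (∅ : Finset (Fin N)) = 1 := by
    rw [hΦ]
    dsimp only
    have hE0 : ∀ j, E j (∅ : Finset (Fin N)) = 0 := by
      intro j
      rw [hE]
      dsimp only
      rw [Finset.powersetCard_eq_empty.mpr (by simpa using pow_pos hp.pos s)]
      simp
    have hfac : ∀ y : ℕ, (y : ZMod p) = 0 → 1 - ((y : ℕ) : ZMod p) ^ (p - 1) = 1 := by
      intro y hy
      rw [hy, zero_pow (by omega : p - 1 ≠ 0), sub_zero]
    rw [Finset.prod_eq_one, Finset.prod_eq_one, mul_one]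
    · intro k _
      rw [Finset.card_empty]
      exact hfac _ (by rw [Nat.choose_eq_zero_of_lt (pow_pos hp.pos k)]; simp)
    · intro j _
      apply Finset.prod_eq_one
      intro k _
      rw [hE0 j]
      exact hfac _ (by rw [Nat.choose_eq_zero_of_lt (pow_pos hp.pos k)]; simp)
  -- existence of a good nonempty set
  set Good : Finset (Fin N) → Prop := fun S =>
    (∀ j : Fin r, ∀ k < α j, p ∣ (E j S).choose (p ^ k)) ∧
    (∀ k < h, p ∣ S.card.choose (p ^ k)) with hGood
  have hgood_exists : ∃ S : Finset (Fin N), S ≠ ∅ ∧ Good S := by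
    by_contra hcon
    push_neg at hcon
    have hzero : ∀ S : Finset (Fin N), S ≠ ∅ → Φ S = 0 := by
      intro S hS
      have hng := hcon S (Finset.nonempty_iff_ne_empty.mpr hS)
      rw [hGood] at hng
      dsimp only at hng
      rw [hΦ]
      dsimp only
      rw [not_and_or] at hng
      have hfac0 : ∀ y : ℕ, ¬ p ∣ y → 1 - ((y : ℕ) : ZMod p) ^ (p - 1) = 0 := by
        intro y hy
        have hy0 : ((y : ℕ) : ZMod p) ≠ 0 := by
          rw [Ne, ZMod.natCast_eq_zero_iff]
          exact hy
        rw [ZMod.pow_card_sub_one_eq_one hy0, sub_self]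
      rcases hng with hng | hng
      · push_neg at hng
        obtain ⟨j, k, hk, hdvd⟩ := hng
        rw [Finset.prod_eq_zero (Finset.mem_univ j), zero_mul]
        exact Finset.prod_eq_zero (Finset.mem_range.mpr hk) (hfac0 _ hdvd)
      · push_neg at hng
        obtain ⟨k, hk, hdvd⟩ := hng
        rw [Finset.prod_eq_zero (Finset.mem_range.mpr hk), mul_zero]
        exact hfac0 _ hdvd
    have hsum : ∑ S : Finset (Fin N), (-1 : ZMod p) ^ S.card * Φ S = 1 := by
      rw [Finset.sum_eq_single (∅ : Finset (Fin N))]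
      · rw [hΦempty, Finset.card_empty, pow_zero, one_mul]
      · intro S _ hS
        rw [hzero S hS, mul_zero]
      · intro hmem
        exact absurd (Finset.mem_univ _) hmem
    rw [hvanish] at hsum
    exact one_ne_zero hsum.symm
  obtain ⟨S₀, hS₀ne, hS₀good⟩ := hgood_exists
  rw [hGood] at hS₀good
  obtain ⟨hgE, hgcard⟩ := hS₀good
  -- cardinality of S₀ is exactly p ^ h
  have hcard_dvd : p ^ h ∣ S₀.card := pow_dvd_of_digits p hp h _ hgcard
  have hcard_le : S₀.card ≤ N := by simpa using Finset.card_le_univ S₀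
  have hcard_pos : 0 < S₀.card := Finset.card_pos.mpr (Finset.nonempty_iff_ne_empty.mpr hS₀ne)
  have hcard : S₀.card = p ^ h := by
    obtain ⟨c, hc⟩ := hcard_dvd
    have hc1 : 1 ≤ c := by
      rcases Nat.eq_zero_or_pos c with h0 | h0
      · rw [h0, mul_zero] at hc; omega
      · exact h0
    have hc2 : c < 2 := by
      by_contra hcge
      push_neg at hcge
      have : 2 * p ^ h ≤ S₀.card := by
        rw [hc]
        calc 2 * p ^ h = p ^ h * 2 := by ring
          _ ≤ p ^ h * c := Nat.mul_le_mul_left _ hcge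
      omega
    have : c = 1 := by omega
    rw [hc, this, mul_one]
  -- divisibility of the coordinates
  have hEdvd : ∀ j : Fin r, p ^ α j ∣ E j S₀ :=
    fun j => pow_dvd_of_digits p hp (α j) _ (hgE j)
  -- construct J
  refine ⟨S₀.map emb, by rw [Finset.card_map, hcard], ?_⟩
  funext j
  haveI : NeZero (p ^ α j) := NeZero.of_pos (pow_pos hp.pos _)
  rw [eSym]
  rw [Finset.powersetCard_map, Finset.sum_apply, Pi.zero_apply]
  rw [Finset.sum_map]
  have hterm : ∀ T ∈ S₀.powersetCard (p ^ s),
      (∏ i ∈ (Finset.mapEmbedding emb).toEmbedding T, g i) j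
        = ((∏ i ∈ T, a i j : ℕ) : ZMod (p ^ α j)) := by
    intro T _
    have hme : (Finset.mapEmbedding emb).toEmbedding T = T.map emb := Finset.mapEmbedding_apply
    rw [hme, Finset.prod_map, Finset.prod_apply, Nat.cast_prod]
    apply Finset.prod_congr rfl
    intro i _
    rw [ha]
    exact (ZMod.natCast_rightInverse (g (emb i) j)).symm
  rw [Finset.sum_congr rfl hterm, ← Nat.cast_sum]
  rw [show ∑ T ∈ S₀.powersetCard (p ^ s), ∏ i ∈ T, a i j = E j S₀ from rfl]
  rw [ZMod.natCast_eq_zero_iff]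
  exact hEdvd j

lemma lower_bound (p : ℕ) (hp : p.Prime) (r : ℕ) (α : Fin r → ℕ) (hα : ∀ j, 1 ≤ α j)
    (s : ℕ) (hbig : ∑ j, p ^ s * (p ^ α j - 1) < p ^ (∑ j, α j)) :
    ∃ g : Fin (p ^ (∑ j, α j) - 1 + p ^ s * ∑ j, (p ^ α j - 1)) →
        (∀ j : Fin r, ZMod (p ^ α j)),
      ∀ J : Finset (Fin (p ^ (∑ j, α j) - 1 + p ^ s * ∑ j, (p ^ α j - 1))),
        J.card = p ^ (∑ j, α j) → eSym (p ^ s) g J ≠ 0 := by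
  classical
  set h := ∑ j, α j with hh
  set d := ∑ j, (p ^ α j - 1) with hd
  set n := p ^ h - 1 + p ^ s * d with hn
  have hp1 : 1 < p := hp.one_lt
  have hps1 : 1 ≤ p ^ s := Nat.one_le_pow _ _ hp.pos
  have hph1 : 1 ≤ p ^ h := Nat.one_le_pow _ _ hp.pos
  -- block structure
  set sz : ℕ → ℕ := fun t => if ht : t < r then p ^ s * (p ^ α ⟨t, ht⟩ - 1) else 0 with hsz
  set c : ℕ → ℕ := fun t => ∑ u ∈ range t, sz u with hc
  have hc_succ : ∀ t, c (t + 1) = c t + sz t := by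
    intro t; rw [hc]; exact Finset.sum_range_succ _ _
  have hcr : c r = p ^ s * d := by
    rw [hc]
    dsimp only
    rw [← Fin.sum_univ_eq_sum_range]
    rw [hd, Finset.mul_sum]
    apply Finset.sum_congr rfl
    intro j _
    rw [hsz]
    dsimp only
    rw [dif_pos j.isLt]
  set cond : Fin n → Fin r → Prop := fun i j =>
    p ^ h - 1 ≤ i.val ∧ c j.val ≤ i.val - (p ^ h - 1) ∧ i.val - (p ^ h - 1) < c (j.val + 1)
    with hcond
  have hdec : ∀ i j, Decidable (cond i j) := fun i j => by
    rw [hcond]; infer_instance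
  set g : Fin n → (∀ j : Fin r, ZMod (p ^ α j)) := fun i j =>
    @ite _ (cond i j) (hdec i j) 0 1 with hg
  refine ⟨g, ?_⟩
  intro J hJ hzero
  -- find an element of J beyond the filler range
  have hstep1 : ∃ i₀ ∈ J, p ^ h - 1 ≤ i₀.val := by
    by_contra hcon
    push_neg at hcon
    have hsub : J ⊆ (univ : Finset (Fin n)).filter (fun i => i.val < p ^ h - 1) := by
      intro i hi
      simp only [Finset.mem_filter, Finset.mem_univ, true_and]
      exact hcon i hi
    have hcardle : J.card ≤ ((univ : Finset (Fin n)).filter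
        (fun i => i.val < p ^ h - 1)).card := Finset.card_le_card hsub
    have himg : ((univ : Finset (Fin n)).filter (fun i => i.val < p ^ h - 1)).card
        ≤ (Finset.range (p ^ h - 1)).card := by
      apply Finset.card_le_card_of_injOn Fin.val
      · intro i hi
        simp only [Finset.mem_coe, Finset.mem_filter] at hi
        exact Finset.mem_range.mpr hi.2
      · intro x _ y _ hxy
        exact Fin.val_injective hxy
    rw [Finset.card_range] at himg
    omega
  obtain ⟨i₀, hi₀J, hi₀⟩ := hstep1
  set o := i₀.val - (p ^ h - 1) with ho
  have ho_lt : o < c r := by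
    rw [hcr]
    have := i₀.isLt
    omega
  -- find the block containing o
  have hfind : ∀ t : ℕ, t ≤ r → ∀ o' : ℕ, o' < c t →
      ∃ u, u < t ∧ c u ≤ o' ∧ o' < c (u + 1) := by
    intro t
    induction t with
    | zero => intro _ o' ho'; rw [hc] at ho'; simp at ho'
    | succ t ih =>
      intro ht o' ho'
      rcases lt_or_ge o' (c t) with h1 | h1
      · obtain ⟨u, hu1, hu2⟩ := ih (by omega) o' h1
        exact ⟨u, by omega, hu2⟩
      · exact ⟨t, by omega, h1, ho'⟩
  obtain ⟨u, hur, hcu1, hcu2⟩ := hfind r (le_refl r) o ho_lt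
  set j₀ : Fin r := ⟨u, hur⟩ with hj₀
  have hcondi₀ : cond i₀ j₀ := by
    rw [hcond]
    exact ⟨hi₀, hcu1, hcu2⟩
  -- the set of "zero" positions in J at coordinate j₀
  set A : Finset (Fin n) := J.filter (fun i => cond i j₀) with hA
  have hAsub : A ⊆ J := Finset.filter_subset _ _
  have ha1 : 1 ≤ A.card :=
    Finset.card_pos.mpr ⟨i₀, Finset.mem_filter.mpr ⟨hi₀J, hcondi₀⟩⟩
  have hszj : sz u = p ^ s * (p ^ α j₀ - 1) := by
    rw [hsz]; dsimp only; rw [dif_pos hur]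
  have ha2 : A.card ≤ p ^ s * (p ^ α j₀ - 1) := by
    have hsubI : ∀ i ∈ A, i.val ∈ Finset.Ico (p ^ h - 1 + c u) (p ^ h - 1 + c (u + 1)) := by
      intro i hi
      rw [hA, Finset.mem_filter, hcond] at hi
      obtain ⟨_, h1, h2, h3⟩ := hi
      have h2' : c u ≤ i.val - (p ^ h - 1) := h2
      have h3' : i.val - (p ^ h - 1) < c (u + 1) := h3
      simp only [Finset.mem_Ico]
      omega
    have := Finset.card_le_card_of_injOn Fin.val hsubI
      (fun x _ y _ hxy => Fin.val_injective hxy)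
    rw [Nat.card_Ico] at this
    calc A.card ≤ p ^ h - 1 + c (u + 1) - (p ^ h - 1 + c u) := this
      _ = sz u := by rw [hc_succ]; omega
      _ = p ^ s * (p ^ α j₀ - 1) := hszj
  -- coordinate j₀ of eSym
  have hco : (eSym (p ^ s) g J) j₀ = 0 := by rw [hzero]; rfl
  rw [eSym, Finset.sum_apply] at hco
  have hprod : ∀ T ∈ J.powersetCard (p ^ s),
      (∏ i ∈ T, g i) j₀ = if (∀ i ∈ T, ¬ cond i j₀) then 1 else 0 := by
    intro T _
    rw [Finset.prod_apply]
    split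
    · rename_i hall
      apply Finset.prod_eq_one
      intro i hi
      rw [hg]
      dsimp only
      rw [if_neg (hall i hi)]
    · rename_i hnall
      push_neg at hnall
      obtain ⟨i, hiT, hic⟩ := hnall
      apply Finset.prod_eq_zero hiT
      rw [hg]
      dsimp only
      rw [if_pos hic]
  rw [Finset.sum_congr rfl hprod, Finset.sum_boole] at hco
  have hfilter : (J.powersetCard (p ^ s)).filter (fun T => ∀ i ∈ T, ¬ cond i j₀)
      = (J \ A).powersetCard (p ^ s) := by
    ext T
    simp only [Finset.mem_filter, Finset.mem_powersetCard, Finset.subset_sdiff]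
    constructor
    · rintro ⟨⟨hTJ, hTc⟩, hall⟩
      refine ⟨⟨hTJ, ?_⟩, hTc⟩
      rw [Finset.disjoint_right]
      intro i hiA hiT
      rw [hA, Finset.mem_filter] at hiA
      exact hall i hiT hiA.2
    · rintro ⟨⟨hTJ, hdisj⟩, hTc⟩
      refine ⟨⟨hTJ, hTc⟩, ?_⟩
      intro i hiT hic
      have hiJ : i ∈ J := hTJ hiT
      have hiA : i ∈ A := by rw [hA, Finset.mem_filter]; exact ⟨hiJ, hic⟩
      exact (Finset.disjoint_right.mp hdisj hiA) hiT
  rw [hfilter, Finset.card_powersetCard, Finset.card_sdiff_of_subset hAsub, hJ] at hco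
  -- contradiction via Kummer
  haveI : NeZero (p ^ α j₀) := NeZero.of_pos (pow_pos hp.pos _)
  have hdvd : p ^ α j₀ ∣ (p ^ h - A.card).choose (p ^ s) :=
    (ZMod.natCast_eq_zero_iff _ _).mp hco
  have hαj : 1 ≤ α j₀ := hα j₀
  have hsum_le : p ^ s * (p ^ α j₀ - 1) ≤ ∑ j, p ^ s * (p ^ α j - 1) :=
    Finset.single_le_sum (f := fun j => p ^ s * (p ^ α j - 1))
      (fun j _ => Nat.zero_le _) (Finset.mem_univ j₀)
  have hsh : s + α j₀ ≤ h := by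
    have h1 : p ^ (s + (α j₀ - 1)) ≤ p ^ s * (p ^ α j₀ - 1) := by
      rw [pow_add]
      apply Nat.mul_le_mul_left
      have h2 : p ^ α j₀ = p * p ^ (α j₀ - 1) := by
        rw [← pow_succ']
        congr 1
        omega
      have h3 : 1 ≤ p ^ (α j₀ - 1) := Nat.one_le_pow _ _ hp.pos
      have h4 : 2 * p ^ (α j₀ - 1) ≤ p * p ^ (α j₀ - 1) :=
        Nat.mul_le_mul_right _ hp1
      omega
    have h4 : p ^ (s + (α j₀ - 1)) < p ^ h := by
      calc p ^ (s + (α j₀ - 1)) ≤ p ^ s * (p ^ α j₀ - 1) := h1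
        _ ≤ ∑ j, p ^ s * (p ^ α j - 1) := hsum_le
        _ < p ^ h := hbig
    have h5 : s + (α j₀ - 1) < h := (Nat.pow_lt_pow_iff_right hp1).mp h4
    omega
  have ha2' : A.card ≤ p ^ (s + α j₀) - p ^ s := by
    obtain ⟨y, hy⟩ : ∃ y, p ^ α j₀ = y + 1 := ⟨p ^ α j₀ - 1, by
      have := Nat.one_le_pow (α j₀) p hp.pos; omega⟩
    have : p ^ (s + α j₀) = p ^ s * (y + 1) := by rw [pow_add, hy]
    have h6 : p ^ s * (p ^ α j₀ - 1) = p ^ s * y := by rw [hy]; simp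
    rw [this]
    rw [h6] at ha2
    have : p ^ s * (y + 1) = p ^ s * y + p ^ s := by ring
    omega
  exact kummer_not_dvd p hp s (α j₀) h A.card ha1 ha2' hsh hdvd

theorem stmt_14 (p : ℕ) (hp : p.Prime) (r : ℕ) (α : Fin r → ℕ) (hα : ∀ j, 1 ≤ α j)
    (s : ℕ) (hbig : ∑ j, p ^ s * (p ^ α j - 1) < p ^ (∑ j, α j)) :
    IsLeast {z : ℕ | ∀ n : ℕ, z ≤ n → ∀ g : Fin n → (∀ j : Fin r, ZMod (p ^ α j)),
        ∃ J : Finset (Fin n), J.card = p ^ (∑ j, α j) ∧ eSym (p ^ s) g J = 0}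
      (p ^ (∑ j, α j) + p ^ s * ∑ j, (p ^ α j - 1)) := by
  constructor
  · intro n hn g
    exact upper_bound p hp r α hα s hbig n hn g
  · intro z hz
    by_contra hlt
    push_neg at hlt
    obtain ⟨g, hg⟩ := lower_bound p hp r α hα s hbig
    have hph1 : 1 ≤ p ^ (∑ j, α j) := Nat.one_le_pow _ _ hp.pos
    obtain ⟨J, hJcard, hJzero⟩ :=
      hz (p ^ (∑ j, α j) - 1 + p ^ s * ∑ j, (p ^ α j - 1)) (by omega) g
    exact hg J hJcard hJzero
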